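/- arXiv:1107.3584 — 3 statements merged into one kernel-verified Lean document; each statement's English description precedes it below -/
import Mathlib

section
/- (Proposition 3, dynamical form.) Let N ≥ 1, let f₁,…,f_N ∈ ℝ[x_1,…,x_N] be multivariate polynomials (f : Fin N → MvPolynomial (Fin N) ℝ), let I = Ideal.span {f i : i ∈ Fin N} and let J = Ideal.span {X i - X j : i, j ∈ Fin N} (equivalently, the ideal generated by x_1 - x_2, x_2 - x_3, …, x_{N-1} - x_N). Suppose there is a solution x : ℝ → (Fin N → ℝ) of the polynomial dynamical system ẋ_i = f_i(x), i.e., for every t and every i the function t ↦ x t i has derivative (MvPolynomial.eval (x t)) (f i) at t, and suppose the system attains consensus: there exists α : ℝ with x t → (fun _ => α) as t → +∞. Then the affine variety of I + J is nonempty — there exists p : Fin N → ℝ with (MvPolynomial.eval p) g = 0 for every g ∈ I ⊔ J — and I ⊔ J is a proper ideal of ℝ[x_1,…,x_N] (I ⊔ J ≠ ⊤). -/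
open Filter MvPolynomial

/-- If `g` has derivative `g'` everywhere, `g` converges at `+∞`, and `g'` converges
to `c` at `+∞`, then `c = 0`. -/
lemma deriv_limit_zero_of_tendsto {g g' : ℝ → ℝ}
    (hd : ∀ t, HasDerivAt g (g' t) t) {α c : ℝ}
    (hg : Tendsto g atTop (nhds α)) (hg' : Tendsto g' atTop (nhds c)) : c = 0 := by
  have hmvt : ∀ t : ℝ, ∃ ξ ∈ Set.Ioo t (t + 1), g' ξ = (g (t + 1) - g t) / ((t + 1) - t) := by
    intro t
    exact exists_hasDerivAt_eq_slope g g' (by linarith)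
      (fun s _ => (hd s).continuousAt.continuousWithinAt)
      (fun s _ => hd s)
  choose ξ hξ hval using hmvt
  have hξtop : Tendsto ξ atTop atTop :=
    tendsto_atTop_mono (fun t => le_of_lt (hξ t).1) tendsto_id
  have h1 : Tendsto (fun t => g' (ξ t)) atTop (nhds c) := hg'.comp hξtop
  have h2 : Tendsto (fun t => g' (ξ t)) atTop (nhds 0) := by
    have : ∀ t, g' (ξ t) = g (t + 1) - g t := by
      intro t; rw [hval t]; ring_nf
    simp only [this]
    have := (hg.comp (tendsto_atTop_add_const_right atTop 1 tendsto_id)).sub hg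
    simpa using this
  exact tendsto_nhds_unique h1 h2

theorem consensus_implies_variety_of_sum_nonempty
    (N : ℕ) (hN : 1 ≤ N)
    (f : Fin N → MvPolynomial (Fin N) ℝ)
    (I : Ideal (MvPolynomial (Fin N) ℝ)) (hI : I = Ideal.span (Set.range f))
    (J : Ideal (MvPolynomial (Fin N) ℝ))
    (hJ : J = Ideal.span {g | ∃ i j : Fin N, g = X i - X j})
    (x : ℝ → (Fin N → ℝ))
    (hx : ∀ (t : ℝ) (i : Fin N),
      HasDerivAt (fun s => x s i) (MvPolynomial.eval (x t) (f i)) t)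
    (hcons : ∃ α : ℝ, Tendsto x atTop (nhds (fun _ => α))) :
    (∃ p : Fin N → ℝ, ∀ g ∈ I ⊔ J, MvPolynomial.eval p g = 0) ∧ I ⊔ J ≠ ⊤ := by
  obtain ⟨α, hα⟩ := hcons
  set p : Fin N → ℝ := fun _ => α with hp
  -- each f i vanishes at p
  have hfzero : ∀ i : Fin N, MvPolynomial.eval p (f i) = 0 := by
    intro i
    have hgi : Tendsto (fun t => x t i) atTop (nhds α) := by
      have := (continuous_apply i).tendsto (fun _ : Fin N => α)
      exact this.comp hα
    have hg' : Tendsto (fun t => MvPolynomial.eval (x t) (f i)) atTop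
        (nhds (MvPolynomial.eval p (f i))) :=
      (MvPolynomial.continuous_eval (p := f i)).tendsto p |>.comp hα
    exact deriv_limit_zero_of_tendsto (fun t => hx t i) hgi hg'
  -- I ⊔ J is contained in the kernel of eval p
  have hker : I ⊔ J ≤ RingHom.ker (MvPolynomial.eval p) := by
    apply sup_le
    · rw [hI, Ideal.span_le]
      rintro g ⟨i, rfl⟩
      exact hfzero i
    · rw [hJ, Ideal.span_le]
      rintro g ⟨i, j, rfl⟩
      simp [RingHom.mem_ker, p]
  constructor
  · exact ⟨p, fun g hg => hker hg⟩
  · intro htop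
    have : (1 : MvPolynomial (Fin N) ℝ) ∈ I ⊔ J := htop ▸ Submodule.mem_top
    have h1 := hker this
    rw [RingHom.mem_ker, map_one] at h1
    exact one_ne_zero h1
end

section
/- Let k be an infinite field and N ≥ 1. A polynomial g ∈ MvPolynomial (Fin N) k vanishes at every diagonal point — i.e., (MvPolynomial.eval (fun _ => α)) g = 0 for every α : k — if and only if g belongs to the ideal J = Ideal.span {X i - X j : i, j ∈ Fin N}. In other words, the ideal I(S) of all polynomials vanishing on the diagonal subspace S equals J. (The paper derives this from Hilbert's Strong Nullstellensatz together with the primality of J.) -/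
open MvPolynomial

theorem vanishing_ideal_of_diagonal
    (k : Type*) [Field k] [Infinite k] (N : ℕ) (hN : 1 ≤ N)
    (J : Ideal (MvPolynomial (Fin N) k))
    (hJ : J = Ideal.span {g | ∃ i j : Fin N, g = X i - X j})
    (g : MvPolynomial (Fin N) k) :
    (∀ α : k, MvPolynomial.eval (fun _ => α) g = 0) ↔ g ∈ J := by
  subst hJ
  constructor
  · intro hvan
    set i0 : Fin N := ⟨0, hN⟩
    -- map to one-variable polynomials
    set φ : MvPolynomial (Fin N) k →ₐ[k] Polynomial k :=
      aeval (fun _ => Polynomial.X) with hφ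
    have heval : ∀ α : k, Polynomial.eval α (φ g) = eval (fun _ => α) g := by
      intro α
      have hcomp : (Polynomial.aeval α : Polynomial k →ₐ[k] k).comp φ =
          MvPolynomial.aeval (fun _ => α) := by
        apply MvPolynomial.algHom_ext
        intro i
        simp [hφ]
      have := congrArg (fun h : MvPolynomial (Fin N) k →ₐ[k] k => h g) hcomp
      simp only [AlgHom.comp_apply] at this
      calc Polynomial.eval α (φ g) = Polynomial.aeval α (φ g) := by
            rw [Polynomial.coe_aeval_eq_eval]
        _ = MvPolynomial.aeval (fun _ => α) g := this
        _ = eval (fun _ => α) g := by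
            exact DFunLike.congr_fun (MvPolynomial.coe_aeval_eq_eval (f := fun _ => α)) g
    have hφg : φ g = 0 := by
      apply Polynomial.zero_of_eval_zero
      intro α
      rw [heval α, hvan α]
    -- substitution sending every variable to X i0
    set f : MvPolynomial (Fin N) k →ₐ[k] MvPolynomial (Fin N) k :=
      aeval (fun _ => X i0) with hf
    have hfg : f g = 0 := by
      have hcomp : (Polynomial.aeval (X i0 : MvPolynomial (Fin N) k)).comp φ = f := by
        apply MvPolynomial.algHom_ext
        intro i
        simp [hφ, hf]
      have := congrArg (fun h : MvPolynomial (Fin N) k →ₐ[k] MvPolynomial (Fin N) k => h g) hcomp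
      simp only [AlgHom.comp_apply] at this
      rw [← this, hφg, map_zero]
    set q := Ideal.Quotient.mkₐ k (Ideal.span {g : MvPolynomial (Fin N) k | ∃ i j : Fin N, g = X i - X j}) with hq
    have hqf : q.comp f = q := by
      apply MvPolynomial.algHom_ext
      intro i
      simp only [AlgHom.comp_apply, hf, aeval_X]
      have : (X i0 - X i : MvPolynomial (Fin N) k) ∈
          Ideal.span {g : MvPolynomial (Fin N) k | ∃ i j : Fin N, g = X i - X j} :=
        Ideal.subset_span ⟨i0, i, rfl⟩
      have := (Ideal.Quotient.eq).mpr this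
      simpa [hq, Ideal.Quotient.mkₐ_eq_mk] using this
    have : q g = 0 := by
      have := congrArg (fun h : MvPolynomial (Fin N) k →ₐ[k] _ => h g) hqf
      simp only [AlgHom.comp_apply] at this
      rw [← this, hfg, map_zero]
    rwa [hq, Ideal.Quotient.mkₐ_eq_mk, Ideal.Quotient.eq_zero_iff_mem] at this
  · intro hg α
    refine Submodule.span_induction ?_ ?_ ?_ ?_ hg
    · rintro p ⟨i, j, rfl⟩
      simp
    · simp
    · intro p q _ _ hp hq
      simp [hp, hq]
    · intro p q _ hq
      simp [hq]
end

section
/- (Proposition 5, part 2.) Let V be a finite nonempty type and E : V → V → Prop a directed graph. Write Reach for the reflexive-transitive closure of E, define i ≺_p j to mean Reach j i, say i ∼_p j if i ≺_p j and j ≺_p i, and call a vertex j maximal if for every i, j ≺_p i implies i ≺_p j. Then the following are equivalent: (1) the graph has a directed spanning tree, i.e., there exists a root vertex r such that Reach r i holds for every i ∈ V; (2) the set of maximal elements of V under ≺_p forms exactly one equivalence class under ∼_p, i.e., it is nonempty and any two maximal vertices are path-equivalent (the quotient Maximal_{≺_p} V / ∼_p has cardinality 1). -/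
theorem directed_spanning_tree_iff_one_maximal_class
    (V : Type*) [Finite V] [Nonempty V] (E : V → V → Prop) :
    (∃ r : V, ∀ i : V, Relation.ReflTransGen E r i) ↔
      ((∃ j : V, ∀ i : V, Relation.ReflTransGen E i j → Relation.ReflTransGen E j i) ∧
        ∀ j j' : V,
          (∀ i : V, Relation.ReflTransGen E i j → Relation.ReflTransGen E j i) →
          (∀ i : V, Relation.ReflTransGen E i j' → Relation.ReflTransGen E j' i) →
          Relation.ReflTransGen E j j' ∧ Relation.ReflTransGen E j' j) := by
  set R := Relation.ReflTransGen E with hR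
  -- strict relation
  have key : ∀ a : V, ∃ m : V, R m a ∧ ∀ x : V, R x m → R m x := by
    intro a
    have : IsTrans V (fun x y : V => R x y ∧ ¬ R y x) := by
      constructor
      intro x y z ⟨h1, h2⟩ ⟨h3, h4⟩
      exact ⟨h1.trans h3, fun h => h2 (h3.trans h)⟩
    have : IsIrrefl V (fun x y : V => R x y ∧ ¬ R y x) := ⟨fun x ⟨h1, h2⟩ => h2 h1⟩
    have wf : WellFounded (fun x y : V => R x y ∧ ¬ R y x) :=
      Finite.wellFounded_of_trans_of_irrefl _
    obtain ⟨m, hm, hmin⟩ := wf.has_min {x : V | R x a} ⟨a, Relation.ReflTransGen.refl⟩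
    refine ⟨m, hm, fun x hx => ?_⟩
    by_contra h
    exact hmin x (hx.trans hm) ⟨hx, h⟩
  constructor
  · rintro ⟨r, hr⟩
    refine ⟨⟨r, fun i _ => hr i⟩, fun j j' hj hj' => ?_⟩
    have h1 := hj r (hr j)
    have h2 := hj' r (hr j')
    exact ⟨h1.trans (hr j'), h2.trans (hr j)⟩
  · rintro ⟨⟨j, hj⟩, huniq⟩
    refine ⟨j, fun i => ?_⟩
    obtain ⟨m, him, hm⟩ := key i
    have := huniq j m hj hm
    exact this.1.trans him
end
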